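/- Let A ∈ R^{m×N} be a random matrix with independent Rademacher (±1 with probability 1/2) entries, let N ≥ 2, and set κ = √(8 ln N). Then with probability at least 2/3 both conditions hold simultaneously: |∑_{j=1}^m A_{j,k}A_{j,k'}| ≤ κ√m for all distinct k, k' ∈ [1:N], and |∑_{j=1}^m A_{j,k}A_{j,k'}A_{j,ℓ}A_{j,ℓ'}| ≤ κ√m for all distinct k, k', ℓ, ℓ' ∈ [1:N]. -/

import Mathlib

open Finset Real
open scoped Classical

noncomputable def rr (b : Bool) : ℝ := if b then 1 else -1

lemma rr_mul (a b : Bool) : rr a * rr b = rr (a == b) := by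
  cases a <;> cases b <;> norm_num [rr]

lemma mgf (m : ℕ) (c : ℝ) :
    ∑ b : Fin m → Bool, Real.exp (c * ∑ j, rr (b j)) = (Real.exp c + Real.exp (-c)) ^ m := by
  classical
  have h1 : ∀ b : Fin m → Bool, Real.exp (c * ∑ j, rr (b j)) = ∏ j, Real.exp (c * rr (b j)) := by
    intro b
    rw [← Real.exp_sum, Finset.mul_sum]
  simp_rw [h1]
  have h2 : (Real.exp c + Real.exp (-c)) ^ m
      = ∏ _j : Fin m, ∑ y : Bool, Real.exp (c * rr y) := by
    simp only [Fintype.sum_bool]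
    norm_num [rr]
  rw [h2, Finset.prod_univ_sum, Fintype.piFinset_univ]

lemma count_one_sided (m : ℕ) (hm : 1 ≤ m) (t : ℝ) (ht : 0 ≤ t) :
    ((Finset.univ.filter fun b : Fin m → Bool => t ≤ ∑ j, rr (b j)).card : ℝ)
      ≤ Real.exp (-(t ^ 2) / (2 * m)) * 2 ^ m := by
  have hm0 : (0:ℝ) < m := by exact_mod_cast hm
  set c : ℝ := t / m with hc
  have hc0 : 0 ≤ c := div_nonneg ht hm0.le
  set F := Finset.univ.filter fun b : Fin m → Bool => t ≤ ∑ j, rr (b j) with hF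
  have h1 : (F.card : ℝ) * Real.exp (c * t) ≤ ∑ b : Fin m → Bool, Real.exp (c * ∑ j, rr (b j)) := by
    calc (F.card : ℝ) * Real.exp (c * t) = ∑ _b ∈ F, Real.exp (c * t) := by
            rw [Finset.sum_const, nsmul_eq_mul]
      _ ≤ ∑ b ∈ F, Real.exp (c * ∑ j, rr (b j)) := by
            refine Finset.sum_le_sum fun b hb => ?_
            exact Real.exp_le_exp.2 (mul_le_mul_of_nonneg_left (Finset.mem_filter.1 hb).2 hc0)
      _ ≤ ∑ b : Fin m → Bool, Real.exp (c * ∑ j, rr (b j)) := by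
            exact Finset.sum_le_sum_of_subset_of_nonneg (Finset.subset_univ _)
              (fun b _ _ => (Real.exp_pos _).le)
  rw [mgf] at h1
  have h2 : (Real.exp c + Real.exp (-c)) ^ m ≤ (2 * Real.exp (c ^ 2 / 2)) ^ m := by
    refine pow_le_pow_left₀ (by positivity) ?_ m
    have := Real.cosh_le_exp_half_sq c
    rw [Real.cosh_eq] at this
    linarith
  have h3 : (F.card : ℝ) * Real.exp (c * t) ≤ 2 ^ m * Real.exp (m * c ^ 2 / 2) := by
    calc (F.card : ℝ) * Real.exp (c * t) ≤ (2 * Real.exp (c ^ 2 / 2)) ^ m := h1.trans h2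
      _ = 2 ^ m * Real.exp (m * c ^ 2 / 2) := by
          rw [mul_pow, ← Real.exp_nat_mul]; ring_nf
  have h4 : (F.card : ℝ) ≤ 2 ^ m * Real.exp (m * c ^ 2 / 2) * Real.exp (-(c * t)) := by
    have := mul_le_mul_of_nonneg_right h3 (Real.exp_pos (-(c * t))).le
    rwa [mul_assoc, ← Real.exp_add, add_neg_cancel, Real.exp_zero, mul_one] at this
  have h5 : 2 ^ m * Real.exp (↑m * c ^ 2 / 2) * Real.exp (-(c * t))
      = Real.exp (-(t ^ 2) / (2 * m)) * 2 ^ m := by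
    rw [mul_assoc, ← Real.exp_add]
    rw [mul_comm]
    congr 1
    rw [hc]
    field_simp
    ring
  linarith [h4, h5.le, h5.ge]

lemma count_two_sided (m : ℕ) (κ : ℝ) (hκ : 0 ≤ κ) :
    ((Finset.univ.filter fun b : Fin m → Bool =>
        κ * Real.sqrt m < |∑ j, rr (b j)|).card : ℝ)
      ≤ 2 * Real.exp (-(κ ^ 2) / 2) * 2 ^ m := by
  rcases Nat.eq_zero_or_pos m with hm | hm
  · subst hm
    simp [rr]
    positivity
  set t := κ * Real.sqrt m with htdef
  have ht : 0 ≤ t := mul_nonneg hκ (Real.sqrt_nonneg _)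
  have hsub : (Finset.univ.filter fun b : Fin m → Bool => t < |∑ j, rr (b j)|)
      ⊆ (Finset.univ.filter fun b : Fin m → Bool => t ≤ ∑ j, rr (b j))
        ∪ (Finset.univ.filter fun b : Fin m → Bool => t ≤ ∑ j, rr ((!b ·) j)) := by
    intro b hb
    have hb' := (Finset.mem_filter.1 hb).2
    rcases lt_abs.1 hb' with h | h
    · exact Finset.mem_union_left _ (Finset.mem_filter.2 ⟨Finset.mem_univ _, h.le⟩)
    · refine Finset.mem_union_right _ (Finset.mem_filter.2 ⟨Finset.mem_univ _, ?_⟩)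
      have : ∀ j : Fin m, rr (!(b j)) = - rr (b j) := by
        intro j; cases b j <;> norm_num [rr]
      simp only [this]
      rw [Finset.sum_neg_distrib]
      linarith
  have hcard2 : (Finset.univ.filter fun b : Fin m → Bool => t ≤ ∑ j, rr ((!b ·) j)).card
      = (Finset.univ.filter fun b : Fin m → Bool => t ≤ ∑ j, rr (b j)).card := by
    refine Finset.card_equiv (Function.Involutive.toPerm (fun b : Fin m → Bool => (!b ·))
      (fun b => by funext j; simp)) ?_
    intro b
    simp [Function.Involutive.toPerm]
  have hexp : Real.exp (-(t ^ 2) / (2 * m)) = Real.exp (-(κ ^ 2) / 2) := by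
    congr 1
    rw [htdef, mul_pow, Real.sq_sqrt (Nat.cast_nonneg m)]
    have hm0 : (m:ℝ) ≠ 0 := by positivity
    field_simp
  have h1 := count_one_sided m hm t ht
  calc ((Finset.univ.filter fun b : Fin m → Bool => t < |∑ j, rr (b j)|).card : ℝ)
      ≤ ((Finset.univ.filter fun b : Fin m → Bool => t ≤ ∑ j, rr (b j)).card : ℝ)
        + ((Finset.univ.filter fun b : Fin m → Bool => t ≤ ∑ j, rr ((!b ·) j)).card : ℝ) := by
          exact_mod_cast (Finset.card_le_card hsub).trans (Finset.card_union_le _ _)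
    _ ≤ 2 * Real.exp (-(κ ^ 2) / 2) * 2 ^ m := by
          rw [hcard2]
          rw [hexp] at h1
          linarith

lemma proj_count (m N : ℕ) (k : Fin N) (Q : (Fin m → Bool) → Prop) :
    (Finset.univ.filter fun ω : Fin m → Fin N → Bool => Q fun j => ω j k).card
      = (Finset.univ.filter Q).card * 2 ^ (m * (N - 1)) := by
  classical
  let E : (Fin m → Fin N → Bool) ≃ (Fin m → Bool) × (Fin m → {i : Fin N // i ≠ k} → Bool) :=
    (Equiv.piCongrRight fun _ : Fin m => Equiv.piSplitAt k fun _ => Bool).trans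
      (Equiv.arrowProdEquivProdArrow _ _ _)
  have hE : ∀ ω, (E ω).1 = fun j => ω j k := fun ω => rfl
  have h0 := Finset.card_equiv E
    (s := Finset.univ.filter fun ω : Fin m → Fin N → Bool => Q fun j => ω j k)
    (t := Finset.univ.filter fun p : (Fin m → Bool) × (Fin m → {i : Fin N // i ≠ k} → Bool) => Q p.1)
    (fun ω => by simp [hE])
  rw [h0]
  have h1 : (Finset.univ.filter fun p : (Fin m → Bool) × (Fin m → {i : Fin N // i ≠ k} → Bool) => Q p.1)
      = (Finset.univ.filter Q) ×ˢ Finset.univ := by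
    ext p; simp [Finset.mem_product]
  rw [h1, Finset.card_product]
  congr 1
  rw [Finset.card_univ]
  rw [Fintype.card_fun, Fintype.card_fun]
  have h2 : Fintype.card {i : Fin N // i ≠ k} = N - 1 := by
    simp [Fintype.card_subtype_compl]
  rw [h2, Fintype.card_fin, ← pow_mul]
  simp [mul_comm]

lemma invol_count (m N : ℕ) (s : Finset (Fin N)) (k : Fin N) (hk : k ∈ s) (t : ℝ) :
    (Finset.univ.filter fun ω : Fin m → Fin N → Bool =>
        t < |∑ j, ∏ i ∈ s, rr (ω j i)|).card
      = (Finset.univ.filter fun ω : Fin m → Fin N → Bool =>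
        t < |∑ j, rr (ω j k)|).card := by
  classical
  set P : (Fin m → Fin N → Bool) → Fin m → ℝ := fun ω j => ∏ i ∈ s.erase k, rr (ω j i) with hP
  have hPmem : ∀ ω j, P ω j = 1 ∨ P ω j = -1 := by
    intro ω j
    refine Finset.prod_induction _ (fun x => x = 1 ∨ x = -1) ?_ (Or.inl rfl) ?_
    · rintro a b (rfl | rfl) (rfl | rfl) <;> norm_num
    · intro i _; cases ω j i <;> simp [rr]
  set e : (Fin m → Fin N → Bool) → (Fin m → Fin N → Bool) :=
    fun ω j i => if i = k then (ω j k == decide (P ω j = 1)) else ω j i with he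
  have hPe : ∀ ω j, P (e ω) j = P ω j := by
    intro ω j
    refine Finset.prod_congr rfl fun i hi => ?_
    have : i ≠ k := (Finset.mem_erase.1 hi).1
    simp [he, this]
  have hrq : ∀ ω j, rr (decide (P ω j = 1)) = P ω j := by
    intro ω j
    rcases hPmem ω j with h | h
    · simp [h, rr]
    · simp [h, rr]
      intro h'; norm_num at h'
  have hsum : ∀ ω j, rr (e ω j k) = ∏ i ∈ s, rr (ω j i) := by
    intro ω j
    have h1 : e ω j k = (ω j k == decide (P ω j = 1)) := by simp [he]
    rw [h1, ← rr_mul, hrq, ← Finset.mul_prod_erase _ _ hk]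
  have hinv : Function.Involutive e := by
    intro ω
    funext j i
    by_cases hik : i = k
    · subst hik
      have h1 : e (e ω) j i = ((e ω) j i == decide (P (e ω) j = 1)) := by simp [he]
      rw [h1, hPe]
      have h2 : (e ω) j i = (ω j i == decide (P ω j = 1)) := by simp [he]
      rw [h2]
      cases ω j i <;> cases decide (P ω j = 1) <;> rfl
    · simp [he, hik]
  refine Finset.card_equiv (hinv.toPerm e) fun ω => ?_
  simp only [Finset.mem_filter, Finset.mem_univ, true_and, Function.Involutive.coe_toPerm]
  have h9 : ∑ j, rr (e ω j k) = ∑ j, ∏ i ∈ s, rr (ω j i) :=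
    Finset.sum_congr rfl fun j _ => hsum ω j
  rw [h9]

lemma meas_filter (m N : ℕ) (P : (Fin m → Fin N → Bool) → Prop) :
    (PMF.uniformOfFintype (Fin m → Fin N → Bool)).toMeasure {ω | P ω}
      = ((Finset.univ.filter P).card : ENNReal) / (((2 : ℕ) ^ (m * N) : ℕ) : ENNReal) := by
  have hm : MeasurableSet {ω : Fin m → Fin N → Bool | P ω} :=
    Set.Finite.measurableSet (Set.toFinite _)
  rw [PMF.toMeasure_uniformOfFintype_apply _ hm]
  have h1 : Fintype.card {ω : Fin m → Fin N → Bool | P ω} = (Finset.univ.filter P).card := by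
    simp [Fintype.card_subtype]
  have h2 : Fintype.card (Fin m → Fin N → Bool) = 2 ^ (m * N) := by
    rw [Fintype.card_fun, Fintype.card_fun, Fintype.card_bool, Fintype.card_fin,
      Fintype.card_fin, ← pow_mul, Nat.mul_comm]
  rw [h1, h2]

/-- A random `m × N` Rademacher matrix satisfies conditions (a) and (b) with
`κ = √(8 ln N)` with probability at least `2/3`. -/
theorem stmt11 (m N : ℕ) (hN : 2 ≤ N) (κ : ℝ) (hκ : κ = Real.sqrt (8 * Real.log N)) :
    (2 / 3 : ENNReal) ≤
      (PMF.uniformOfFintype (Fin m → Fin N → Bool)).toMeasure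
        {ω | (∀ k k' : Fin N, k ≠ k' →
            |∑ j, (if ω j k then (1 : ℝ) else -1) * (if ω j k' then (1 : ℝ) else -1)|
              ≤ κ * Real.sqrt m) ∧
          (∀ k k' l l' : Fin N, k ≠ k' → k ≠ l → k ≠ l' → k' ≠ l → k' ≠ l' → l ≠ l' →
            |∑ j, (if ω j k then (1 : ℝ) else -1) * (if ω j k' then (1 : ℝ) else -1) *
                (if ω j l then (1 : ℝ) else -1) * (if ω j l' then (1 : ℝ) else -1)|
              ≤ κ * Real.sqrt m)} := by
  classical
  have hN1 : (1:ℝ) ≤ N := by exact_mod_cast Nat.one_le_of_lt hN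
  have hNpos : (0:ℝ) < N := by linarith
  have hlog : 0 ≤ Real.log N := Real.log_nonneg hN1
  have hκ0 : 0 ≤ κ := hκ ▸ Real.sqrt_nonneg _
  have hκsq : κ ^ 2 = 8 * Real.log N := by
    rw [hκ, Real.sq_sqrt (by linarith)]
  have hexp : Real.exp (-(κ ^ 2) / 2) = ((N:ℝ) ^ 4)⁻¹ := by
    rw [hκsq]
    have : -(8 * Real.log N) / 2 = -((4:ℕ) * Real.log N) := by push_cast; ring
    rw [this, Real.exp_neg, Real.exp_nat_mul, Real.exp_log hNpos]
  -- the bad-event predicate per index set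
  set t : ℝ := κ * Real.sqrt m with htdef
  set Es : Finset (Fin N) → Finset (Fin m → Fin N → Bool) :=
    fun s => Finset.univ.filter fun ω => t < |∑ j, ∏ i ∈ s, rr (ω j i)| with hEs
  have hEsbound : ∀ s : Finset (Fin N), s.Nonempty →
      ((Es s).card : ℝ) ≤ 2 * ((N:ℝ) ^ 4)⁻¹ * 2 ^ (m * N) := by
    intro s hs
    obtain ⟨k, hk⟩ := hs
    have h1 : (Es s).card = (Finset.univ.filter
        fun b : Fin m → Bool => t < |∑ j, rr (b j)|).card * 2 ^ (m * (N - 1)) := by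
      rw [hEs]
      rw [invol_count m N s k hk t]
      exact proj_count m N k (fun b => t < |∑ j, rr (b j)|)
    rw [h1]
    push_cast
    calc ((Finset.univ.filter fun b : Fin m → Bool => t < |∑ j, rr (b j)|).card : ℝ)
          * 2 ^ (m * (N - 1))
        ≤ (2 * Real.exp (-(κ ^ 2) / 2) * 2 ^ m) * 2 ^ (m * (N - 1)) := by
          have := count_two_sided m κ hκ0
          have h2 : (0:ℝ) ≤ 2 ^ (m * (N - 1)) := by positivity
          exact mul_le_mul_of_nonneg_right this h2
      _ = 2 * ((N:ℝ) ^ 4)⁻¹ * 2 ^ (m * N) := by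
          rw [hexp, mul_assoc, ← pow_add]
          have h7 : N - 1 + 1 = N := Nat.sub_add_cancel (le_trans one_le_two hN)
          have h6 : m + m * (N - 1) = m * N := by
            calc m + m * (N - 1) = m * (N - 1) + m := Nat.add_comm _ _
              _ = m * (N - 1 + 1) := (Nat.mul_succ _ _).symm
              _ = m * N := by rw [h7]
          rw [h6]
  -- union bound
  set GoodP : (Fin m → Fin N → Bool) → Prop := fun ω =>
    (∀ k k' : Fin N, k ≠ k' →
        |∑ j, (if ω j k then (1 : ℝ) else -1) * (if ω j k' then (1 : ℝ) else -1)|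
          ≤ κ * Real.sqrt m) ∧
      (∀ k k' l l' : Fin N, k ≠ k' → k ≠ l → k ≠ l' → k' ≠ l → k' ≠ l' → l ≠ l' →
        |∑ j, (if ω j k then (1 : ℝ) else -1) * (if ω j k' then (1 : ℝ) else -1) *
            (if ω j l then (1 : ℝ) else -1) * (if ω j l' then (1 : ℝ) else -1)|
          ≤ κ * Real.sqrt m) with hGoodP
  set U : Finset (Finset (Fin N)) :=
    (Finset.univ.powersetCard 2) ∪ (Finset.univ.powersetCard 4) with hU
  have hsubU : (Finset.univ.filter fun ω => ¬ GoodP ω) ⊆ U.biUnion Es := by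
    intro ω hω
    have hbad := (Finset.mem_filter.1 hω).2
    rw [hGoodP, not_and_or] at hbad
    rcases hbad with hbad | hbad
    · push_neg at hbad
      obtain ⟨k, k', hne, hviol⟩ := hbad
      refine Finset.mem_biUnion.2 ⟨{k, k'}, ?_, ?_⟩
      · refine Finset.mem_union_left _ (Finset.mem_powersetCard.2 ⟨Finset.subset_univ _, ?_⟩)
        rw [Finset.card_insert_of_notMem (by simpa using hne), Finset.card_singleton]
      · refine Finset.mem_filter.2 ⟨Finset.mem_univ _, ?_⟩
        have hprod : ∀ j, ∏ i ∈ ({k, k'} : Finset (Fin N)), rr (ω j i)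
            = (if ω j k then (1 : ℝ) else -1) * (if ω j k' then (1 : ℝ) else -1) := by
          intro j
          rw [Finset.prod_insert (by simpa using hne), Finset.prod_singleton]
          rfl
        simp only [hprod]
        exact hviol
    · push_neg at hbad
      obtain ⟨k, k', l, l', h1, h2, h3, h4, h5, h6, hviol⟩ := hbad
      refine Finset.mem_biUnion.2 ⟨{k, k', l, l'}, ?_, ?_⟩
      · refine Finset.mem_union_right _ (Finset.mem_powersetCard.2 ⟨Finset.subset_univ _, ?_⟩)
        rw [Finset.card_insert_of_notMem (by simp [h1, h2, h3]),
          Finset.card_insert_of_notMem (by simp [h4, h5]),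
          Finset.card_insert_of_notMem (by simpa using h6), Finset.card_singleton]
      · refine Finset.mem_filter.2 ⟨Finset.mem_univ _, ?_⟩
        have hprod : ∀ j, ∏ i ∈ ({k, k', l, l'} : Finset (Fin N)), rr (ω j i)
            = (if ω j k then (1 : ℝ) else -1) * (if ω j k' then (1 : ℝ) else -1) *
                (if ω j l then (1 : ℝ) else -1) * (if ω j l' then (1 : ℝ) else -1) := by
          intro j
          rw [Finset.prod_insert (by simp [h1, h2, h3]),
            Finset.prod_insert (by simp [h4, h5]),
            Finset.prod_insert (by simpa using h6), Finset.prod_singleton]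
          simp only [rr]
          ring
        simp only [hprod]
        exact hviol
  -- counting
  set cB := (Finset.univ.filter fun ω => ¬ GoodP ω).card with hcB
  have hcBU : (cB : ℝ) ≤ ((N.choose 2 : ℝ) + N.choose 4) * (2 * ((N:ℝ) ^ 4)⁻¹ * 2 ^ (m * N)) := by
    have hstep1 : cB ≤ ∑ s ∈ U, (Es s).card :=
      (Finset.card_le_card hsubU).trans (Finset.card_biUnion_le)
    have hstep2 : (∑ s ∈ U, ((Es s).card : ℝ))
        ≤ U.card * (2 * ((N:ℝ) ^ 4)⁻¹ * 2 ^ (m * N)) := by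
      rw [← nsmul_eq_mul]
      refine Finset.sum_le_card_nsmul _ _ _ fun s hsU => ?_
      refine hEsbound s ?_
      rw [hU, Finset.mem_union] at hsU
      rcases hsU with h | h <;>
        · have := (Finset.mem_powersetCard.1 h).2
          exact Finset.card_pos.1 (by omega)
    have hstep3 : (U.card : ℝ) ≤ (N.choose 2 : ℝ) + N.choose 4 := by
      have := Finset.card_union_le (Finset.univ.powersetCard 2 : Finset (Finset (Fin N)))
        (Finset.univ.powersetCard 4)
      rw [hU]
      push_cast
      calc ((Finset.univ.powersetCard 2 ∪ Finset.univ.powersetCard 4 : Finset (Finset (Fin N))).card : ℝ)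
          ≤ ((Finset.univ.powersetCard 2 : Finset (Finset (Fin N))).card : ℝ)
            + (Finset.univ.powersetCard 4 : Finset (Finset (Fin N))).card := by exact_mod_cast this
        _ = (N.choose 2 : ℝ) + N.choose 4 := by
            rw [Finset.card_powersetCard, Finset.card_powersetCard, Finset.card_univ,
              Fintype.card_fin]
    calc (cB : ℝ) ≤ ∑ s ∈ U, ((Es s).card : ℝ) := by exact_mod_cast hstep1
      _ ≤ U.card * (2 * ((N:ℝ) ^ 4)⁻¹ * 2 ^ (m * N)) := hstep2
      _ ≤ ((N.choose 2 : ℝ) + N.choose 4) * (2 * ((N:ℝ) ^ 4)⁻¹ * 2 ^ (m * N)) := by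
          refine mul_le_mul_of_nonneg_right hstep3 (by positivity)
  have hfrac : ((N.choose 2 : ℝ) + N.choose 4) * (2 * ((N:ℝ) ^ 4)⁻¹) ≤ 1 / 3 := by
    have hc2 : (N.choose 2 : ℝ) ≤ (N:ℝ) ^ 2 / 2 := by
      have := Nat.choose_le_pow_div (α := ℝ) 2 N
      norm_num [Nat.factorial] at this
      push_cast
      linarith
    have hc4 : (N.choose 4 : ℝ) ≤ (N:ℝ) ^ 4 / 24 := by
      have := Nat.choose_le_pow_div (α := ℝ) 4 N
      norm_num [Nat.factorial] at this
      push_cast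
      linarith
    have hN2 : (2:ℝ) ≤ N := by exact_mod_cast hN
    have hN4 : (0:ℝ) < (N:ℝ) ^ 4 := by positivity
    have hstep : ((N.choose 2 : ℝ) + N.choose 4) * (2 * ((N:ℝ) ^ 4)⁻¹)
        ≤ ((N:ℝ) ^ 2 / 2 + (N:ℝ) ^ 4 / 24) * (2 * ((N:ℝ) ^ 4)⁻¹) :=
      mul_le_mul_of_nonneg_right (by linarith) (by positivity)
    have heq : ((N:ℝ) ^ 2 / 2 + (N:ℝ) ^ 4 / 24) * (2 * ((N:ℝ) ^ 4)⁻¹)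
        = ((N:ℝ) ^ 2)⁻¹ + 1 / 12 := by
      field_simp
      ring
    have hN2sq : (4:ℝ) ≤ (N:ℝ) ^ 2 := by nlinarith
    have hinv : ((N:ℝ) ^ 2)⁻¹ ≤ 1 / 4 := by
      rw [inv_le_comm₀ (by positivity) (by norm_num)]
      linarith
    rw [heq] at hstep
    linarith
  have hcB3 : 3 * cB ≤ 2 ^ (m * N) := by
    have hT : (0:ℝ) ≤ 2 ^ (m * N) := by positivity
    have h1 : (cB : ℝ) ≤ (1/3) * 2 ^ (m * N) := by
      calc (cB : ℝ) ≤ ((N.choose 2 : ℝ) + N.choose 4) * (2 * ((N:ℝ) ^ 4)⁻¹) * 2 ^ (m * N) := by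
            rw [mul_assoc]; exact hcBU
        _ ≤ (1/3) * 2 ^ (m * N) := mul_le_mul_of_nonneg_right hfrac hT
    have h2 : ((3 * cB : ℕ) : ℝ) ≤ ((2 ^ (m * N) : ℕ) : ℝ) := by push_cast; linarith
    exact_mod_cast h2
  -- conclude
  have hmeas := meas_filter m N GoodP
  have hcount : (Finset.univ.filter GoodP).card + cB = 2 ^ (m * N) := by
    rw [hcB]
    rw [Finset.card_filter_add_card_filter_not]
    rw [Finset.card_univ]
    rw [Fintype.card_fun, Fintype.card_fun, Fintype.card_bool, Fintype.card_fin,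
      Fintype.card_fin, ← pow_mul, Nat.mul_comm]
  have hgood : 2 * 2 ^ (m * N) ≤ 3 * (Finset.univ.filter GoodP).card := by omega
  rw [hmeas, Finset.filter_congr_decidable]
  set cG := (Finset.univ.filter GoodP).card with hcG
  have hTne : (((2:ℕ) ^ (m * N) : ℕ) : ENNReal) ≠ 0 := by
    simp [pow_ne_zero]
  have hTtop : (((2:ℕ) ^ (m * N) : ℕ) : ENNReal) ≠ ⊤ := by
    exact ENNReal.natCast_ne_top _
  have h3ne : (3 : ENNReal) ≠ 0 := by norm_num
  have h3top : (3 : ENNReal) ≠ ⊤ := by norm_num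
  have key : (2 : ENNReal) * ((2:ℕ) ^ (m * N) : ℕ) ≤ 3 * (cG : ENNReal) := by
    have : ((2 * 2 ^ (m * N) : ℕ) : ENNReal) ≤ ((3 * cG : ℕ) : ENNReal) := by
      exact_mod_cast Nat.cast_le.2 hgood
    push_cast at this
    convert this using 2 <;> push_cast <;> ring
  calc (2 / 3 : ENNReal)
      = (2 * (((2:ℕ) ^ (m * N) : ℕ) : ENNReal)) / (3 * (((2:ℕ) ^ (m * N) : ℕ) : ENNReal)) := by
        rw [ENNReal.mul_div_mul_right _ _ hTne hTtop]
    _ ≤ (3 * (cG : ENNReal)) / (3 * (((2:ℕ) ^ (m * N) : ℕ) : ENNReal)) :=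
        ENNReal.div_le_div_right key _
    _ = (cG : ENNReal) / (((2:ℕ) ^ (m * N) : ℕ) : ENNReal) := by
        rw [ENNReal.mul_div_mul_left _ _ h3ne h3top]
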